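/- (Lemma 1, rotation modeling of covariance matrices) For every dimension n ≥ 2 and every symmetric positive semidefinite matrix Q ∈ ℝ^{n×n}, there exist nonnegative reals λ_1, …, λ_n and angles θ = (θ_{ij})_{1 ≤ i < j ≤ n} in ℝ such that Q = V(θ) Λ V(θ)ᵀ, where Λ = diag(λ_1, …, λ_n) and V(θ) = ∏_{i=1}^{n−1} ∏_{j=i+1}^{n} G_{ij}(θ_{ij}) with factors multiplied in lexicographic order of (i,j). Conversely, every matrix of the form V(θ) Λ V(θ)ᵀ with Λ diagonal and nonnegative is symmetric positive semidefinite. -/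

import Mathlib

open Matrix

/-- The Givens rotation matrix `G_{ij}(θ) ∈ ℝ^{n×n}`: the identity matrix except for the
entries `(i,i) = (j,j) = cos θ`, `(i,j) = -sin θ` and `(j,i) = sin θ`. -/
noncomputable def givensMat (n : ℕ) (i j : Fin n) (θ : ℝ) : Matrix (Fin n) (Fin n) ℝ :=
  fun k l =>
    if k = i ∧ l = i then Real.cos θ
    else if k = j ∧ l = j then Real.cos θ
    else if k = i ∧ l = j then -Real.sin θ
    else if k = j ∧ l = i then Real.sin θ
    else if k = l then 1 else 0

variable {n : ℕ}

lemma givens_apply {i j : Fin n} (h : i ≠ j) (θ : ℝ) (k l : Fin n) :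
    givensMat n i j θ k l =
      if k = i then (if l = i then Real.cos θ else if l = j then -Real.sin θ else 0)
      else if k = j then (if l = i then Real.sin θ else if l = j then Real.cos θ else 0)
      else if l = k then 1 else 0 := by
  show (if k = i ∧ l = i then Real.cos θ
    else if k = j ∧ l = j then Real.cos θ
    else if k = i ∧ l = j then -Real.sin θ
    else if k = j ∧ l = i then Real.sin θ
    else if k = l then 1 else 0) = _
  by_cases h1 : k = i ∧ l = i
  · rw [if_pos h1, if_pos h1.1, if_pos h1.2]
  · rw [if_neg h1]
    by_cases h2 : k = j ∧ l = j
    · have hki : ¬ k = i := fun e => h (e.symm.trans h2.1)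
      have hli : ¬ l = i := fun e => h (e.symm.trans h2.2)
      rw [if_pos h2, if_neg hki, if_pos h2.1, if_neg hli, if_pos h2.2]
    · rw [if_neg h2]
      by_cases h3 : k = i ∧ l = j
      · have hli : ¬ l = i := fun e => h1 ⟨h3.1, e⟩
        rw [if_pos h3, if_pos h3.1, if_neg hli, if_pos h3.2]
      · rw [if_neg h3]
        by_cases h4 : k = j ∧ l = i
        · have hki : ¬ k = i := fun e => h (e.symm.trans h4.1)
          rw [if_pos h4, if_neg hki, if_pos h4.1, if_pos h4.2]
        · rw [if_neg h4]
          by_cases h5 : k = l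
          · have hki : ¬ k = i := fun e => h1 ⟨e, h5.symm.trans e⟩
            have hkj : ¬ k = j := fun e => h2 ⟨e, h5.symm.trans e⟩
            rw [if_pos h5, if_neg hki, if_neg hkj, if_pos h5.symm]
          · by_cases hki : k = i
            · have hli : ¬ l = i := fun e => h1 ⟨hki, e⟩
              have hlj : ¬ l = j := fun e => h3 ⟨hki, e⟩
              rw [if_neg h5, if_pos hki, if_neg hli, if_neg hlj]
            · by_cases hkj : k = j
              · have hlj : ¬ l = j := fun e => h2 ⟨hkj, e⟩
                have hli : ¬ l = i := fun e => h4 ⟨hkj, e⟩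
                rw [if_neg h5, if_neg hki, if_pos hkj, if_neg hli, if_neg hlj]
              · have hlk : ¬ l = k := fun e => h5 e.symm
                rw [if_neg h5, if_neg hki, if_neg hkj, if_neg hlk]

lemma givens_zero (i j : Fin n) : givensMat n i j 0 = 1 := by
  funext k l
  simp only [givensMat, Real.cos_zero, Real.sin_zero, neg_zero, Matrix.one_apply]
  split_ifs with h1 h2 h3 h4 h5 <;> simp_all <;>
    first
      | exact absurd ((‹l = i ∧ l = j›).1.symm.trans (‹l = i ∧ l = j›).2) ‹¬ i = j›
      | exact absurd ((‹l = j ∧ l = i›).1.symm.trans (‹l = j ∧ l = i›).2) ‹¬ j = i›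

lemma givens_row {i j : Fin n} (h : i ≠ j) (θ : ℝ) (X : Matrix (Fin n) (Fin n) ℝ) (k l : Fin n) :
    (givensMat n i j θ * X) k l =
      if k = i then Real.cos θ * X i l - Real.sin θ * X j l
      else if k = j then Real.sin θ * X i l + Real.cos θ * X j l
      else X k l := by
  rw [Matrix.mul_apply]
  by_cases hki : k = i
  · have key : ∀ m, givensMat n i j θ k m * X m l =
        (if m = i then Real.cos θ * X i l else 0) + (if m = j then -Real.sin θ * X j l else 0) := by
      intro m
      rw [givens_apply h, if_pos hki]
      split_ifs with h1 h2 <;> simp_all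
    rw [Finset.sum_congr rfl (fun m _ => key m), Finset.sum_add_distrib]
    simp only [Finset.sum_ite_eq', Finset.mem_univ, if_true]
    rw [if_pos hki]; ring
  · by_cases hkj : k = j
    · have key : ∀ m, givensMat n i j θ k m * X m l =
          (if m = i then Real.sin θ * X i l else 0) + (if m = j then Real.cos θ * X j l else 0) := by
        intro m
        rw [givens_apply h, if_neg hki, if_pos hkj]
        split_ifs with h1 h2 <;> simp_all
      rw [Finset.sum_congr rfl (fun m _ => key m), Finset.sum_add_distrib]
      simp only [Finset.sum_ite_eq', Finset.mem_univ, if_true]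
      rw [if_neg hki, if_pos hkj]
    · have key : ∀ m, givensMat n i j θ k m * X m l = (if m = k then X k l else 0) := by
        intro m
        rw [givens_apply h, if_neg hki, if_neg hkj]
        split_ifs with h1 <;> simp_all
      rw [Finset.sum_congr rfl (fun m _ => key m)]
      simp only [Finset.sum_ite_eq', Finset.mem_univ, if_true]
      rw [if_neg hki, if_neg hkj]

set_option maxRecDepth 10000 in
lemma givens_mul {i j : Fin n} (h : i ≠ j) (α β : ℝ) :
    givensMat n i j α * givensMat n i j β = givensMat n i j (α + β) := by
  funext k l
  rw [givens_row h, givens_apply h (α+β), givens_apply h β, givens_apply h β, givens_apply h β]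
  split_ifs <;> simp_all [Real.cos_add, Real.sin_add] <;> ring

lemma givens_transpose {i j : Fin n} (h : i ≠ j) (θ : ℝ) :
    (givensMat n i j θ)ᵀ = givensMat n i j (-θ) := by
  funext k l
  rw [Matrix.transpose_apply, givens_apply h, givens_apply h]
  by_cases hki : k = i <;> by_cases hkj : k = j <;> by_cases hli : l = i <;>
    by_cases hlj : l = j <;> simp_all [eq_comm]

lemma givens_orth {i j : Fin n} (h : i ≠ j) (θ : ℝ) :
    (givensMat n i j θ)ᵀ * givensMat n i j θ = 1 := by
  rw [givens_transpose h, givens_mul h, neg_add_cancel, givens_zero]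

lemma givens_det {i j : Fin n} (h : i ≠ j) (θ : ℝ) :
    (givensMat n i j θ).det = 1 := by
  have h2 : (givensMat n i j θ).det ^ 2 = 1 := by
    have := congrArg Matrix.det (givens_orth h θ)
    rwa [Matrix.det_mul, Matrix.det_transpose, Matrix.det_one, ← sq] at this
  have h0 : 0 ≤ (givensMat n i j θ).det := by
    have : givensMat n i j (θ/2) * givensMat n i j (θ/2) = givensMat n i j θ := by
      rw [givens_mul h]; norm_num
    rw [← this, Matrix.det_mul]
    exact mul_self_nonneg _
  nlinarith [h2, h0]

variable {n : ℕ}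

/-- Embed an n×n matrix into (n+1)×(n+1), acting as identity on the index `p`. -/
noncomputable def liftAt (p : Fin (n+1)) :
    Matrix (Fin n) (Fin n) ℝ →* Matrix (Fin (n+1)) (Fin (n+1)) ℝ where
  toFun M := (Matrix.fromBlocks M 0 0 (1 : Matrix Unit Unit ℝ)).submatrix
      ((finSuccEquiv' p).trans (Equiv.optionEquivSumPUnit.{0,0} (Fin n)))
      ((finSuccEquiv' p).trans (Equiv.optionEquivSumPUnit.{0,0} (Fin n)))
  map_one' := by
    show (Matrix.fromBlocks (1 : Matrix (Fin n) (Fin n) ℝ) 0 0 (1 : Matrix Unit Unit ℝ)).submatrix _ _ = 1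
    rw [Matrix.fromBlocks_one]
    exact Matrix.submatrix_one_equiv _
  map_mul' M N := by
    show (Matrix.fromBlocks (M * N) 0 0 (1 : Matrix Unit Unit ℝ)).submatrix _ _ =
      (Matrix.fromBlocks M 0 0 (1 : Matrix Unit Unit ℝ)).submatrix _ _ *
      (Matrix.fromBlocks N 0 0 (1 : Matrix Unit Unit ℝ)).submatrix _ _
    rw [Matrix.submatrix_mul_equiv _ _ _ ((finSuccEquiv' p).trans (Equiv.optionEquivSumPUnit.{0,0} (Fin n))) _]
    rw [Matrix.fromBlocks_multiply]
    simp

lemma liftAt_apply_succAbove (p : Fin (n+1)) (M : Matrix (Fin n) (Fin n) ℝ) (a b : Fin n) :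
    liftAt p M (p.succAbove a) (p.succAbove b) = M a b := by
  simp [liftAt, finSuccEquiv'_succAbove]

lemma liftAt_apply_pivot_pivot (p : Fin (n+1)) (M : Matrix (Fin n) (Fin n) ℝ) :
    liftAt p M p p = 1 := by
  simp [liftAt, finSuccEquiv'_at]

lemma liftAt_apply_pivot_succAbove (p : Fin (n+1)) (M : Matrix (Fin n) (Fin n) ℝ) (b : Fin n) :
    liftAt p M p (p.succAbove b) = 0 := by
  simp [liftAt, finSuccEquiv'_at, finSuccEquiv'_succAbove]

lemma liftAt_apply_succAbove_pivot (p : Fin (n+1)) (M : Matrix (Fin n) (Fin n) ℝ) (a : Fin n) :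
    liftAt p M (p.succAbove a) p = 0 := by
  simp [liftAt, finSuccEquiv'_at, finSuccEquiv'_succAbove]

lemma liftAt_transpose (p : Fin (n+1)) (M : Matrix (Fin n) (Fin n) ℝ) :
    (liftAt p M)ᵀ = liftAt p Mᵀ := by
  show ((Matrix.fromBlocks M 0 0 (1 : Matrix Unit Unit ℝ)).submatrix _ _)ᵀ = _
  rw [Matrix.transpose_submatrix, Matrix.fromBlocks_transpose]
  simp [liftAt]

lemma liftAt_det (p : Fin (n+1)) (M : Matrix (Fin n) (Fin n) ℝ) :
    (liftAt p M).det = M.det := by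
  show ((Matrix.fromBlocks M 0 0 (1 : Matrix Unit Unit ℝ)).submatrix _ _).det = _
  rw [Matrix.det_submatrix_equiv_self, Matrix.det_fromBlocks_zero₂₁]
  simp

lemma liftAt_givens (p : Fin (n+1)) (i j : Fin n) (h : i ≠ j) (θ : ℝ) :
    liftAt p (givensMat n i j θ) = givensMat (n+1) (p.succAbove i) (p.succAbove j) θ := by
  have hij : p.succAbove i ≠ p.succAbove j := by
    simp [Fin.succAbove_right_inj, h]
  funext a b
  rw [givens_apply hij]
  by_cases ha : a = p
  · subst ha
    rw [if_neg (Fin.ne_succAbove _ _), if_neg (Fin.ne_succAbove _ _)]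
    by_cases hb : b = a
    · rw [if_pos hb, hb, liftAt_apply_pivot_pivot]
    · obtain ⟨b', rfl⟩ := Fin.exists_succAbove_eq (fun e => hb e)
      rw [if_neg hb, liftAt_apply_pivot_succAbove]
  · obtain ⟨a', rfl⟩ := Fin.exists_succAbove_eq ha
    by_cases hb : b = p
    · rw [hb, liftAt_apply_succAbove_pivot]
      have h1 := Fin.ne_succAbove p i
      have h2 := Fin.ne_succAbove p j
      have h3 := Fin.ne_succAbove p a'
      simp [h1, h2, h3]
    · obtain ⟨b', rfl⟩ := Fin.exists_succAbove_eq hb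
      rw [liftAt_apply_succAbove, givens_apply h]
      simp only [Fin.succAbove_right_inj]

/-- `V(θ) = ∏_{i=1}^{n-1} ∏_{j=i+1}^{n} G_{ij}(θ_{ij})`, the factors multiplied in
lexicographic order of the index pairs `(i,j)`. -/
noncomputable def rotMat (n : ℕ) (θ : Fin n → Fin n → ℝ) : Matrix (Fin n) (Fin n) ℝ :=
  (((List.finRange n).map (fun i =>
      ((List.finRange n).filter (fun j => i < j)).map
        (fun j => givensMat n i j (θ i j)))).flatten).prod

noncomputable def rowProd (n : ℕ) (t : Fin (n+1) → ℝ) : Matrix (Fin (n+1)) (Fin (n+1)) ℝ :=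
  (((List.finRange (n+1)).filter (fun j => (0 : Fin (n+1)) < j)).map
    (fun j => givensMat (n+1) 0 j (t j))).prod

lemma prod_orth : ∀ (l : List (Matrix (Fin n) (Fin n) ℝ)),
    (∀ M ∈ l, Mᵀ * M = 1) → (l.prod)ᵀ * l.prod = 1 := by
  intro l
  induction l with
  | nil => simp
  | cons M l ih =>
    intro h
    rw [List.prod_cons, Matrix.transpose_mul, mul_assoc, ← mul_assoc Mᵀ,
      h M List.mem_cons_self, one_mul, ih (fun N hN => h N (List.mem_cons_of_mem M hN))]

lemma prod_det : ∀ (l : List (Matrix (Fin n) (Fin n) ℝ)),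
    (∀ M ∈ l, M.det = 1) → (l.prod).det = 1 := by
  intro l
  induction l with
  | nil => simp
  | cons M l ih =>
    intro h
    rw [List.prod_cons, Matrix.det_mul, h M List.mem_cons_self, one_mul,
      ih (fun N hN => h N (List.mem_cons_of_mem M hN))]

lemma map_finRange_succ {β : Type*} (f : Fin (n+1) → β) :
    (List.finRange (n+1)).map f = f 0 :: (List.finRange n).map (f ∘ Fin.succ) := by
  rw [List.finRange_succ, List.map_cons, List.map_map]

lemma filter_finRange_zero :
    (List.finRange (n+1)).filter (fun j => (0 : Fin (n+1)) < j) = (List.finRange n).map Fin.succ := by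
  rw [List.finRange_succ, List.filter_cons]
  have h0 : (decide ((0:Fin (n+1)) < 0)) = false := by simp
  rw [h0]
  simp only [Bool.false_eq_true, if_false]
  rw [List.filter_map]
  have : List.filter ((fun j => decide ((0:Fin (n+1)) < j)) ∘ Fin.succ) (List.finRange n)
      = List.finRange n := by
    apply List.filter_eq_self.mpr
    intro a _
    simp [Fin.succ_pos]
  rw [this]

lemma filter_finRange_succ (i : Fin n) :
    (List.finRange (n+1)).filter (fun j => (Fin.succ i) < j)
      = ((List.finRange n).filter (fun j => i < j)).map Fin.succ := by
  rw [List.finRange_succ, List.filter_cons]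
  have h0 : (decide ((Fin.succ i) < (0 : Fin (n+1)))) = false := by simp
  rw [h0]
  simp only [Bool.false_eq_true, if_false]
  rw [List.filter_map]
  congr 1
  apply List.filter_congr
  intro a _
  simp [Fin.succ_lt_succ_iff]

lemma rotMat_succ (θ : Fin (n+1) → Fin (n+1) → ℝ) :
    rotMat (n+1) θ = rowProd n (θ 0) * liftAt 0 (rotMat n (fun i j => θ i.succ j.succ)) := by
  unfold rotMat
  rw [map_finRange_succ, List.flatten_cons, List.prod_append]
  congr 1
  have hF : List.map ((fun i => ((List.finRange (n+1)).filter (fun j => i < j)).map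
        (fun j => givensMat (n+1) i j (θ i j))) ∘ Fin.succ) (List.finRange n)
      = List.map (List.map (liftAt 0)) (List.map (fun i => ((List.finRange n).filter
          (fun j => i < j)).map (fun j => givensMat n i j (θ i.succ j.succ))) (List.finRange n)) := by
    rw [List.map_map]
    apply List.map_congr_left
    intro i' _
    simp only [Function.comp_apply]
    rw [filter_finRange_succ, List.map_map, List.map_map]
    apply List.map_congr_left
    intro j' hj'
    have hlt : i' < j' := by
      have := (List.mem_filter.mp hj').2
      simpa using this
    simp only [Function.comp_apply]
    rw [liftAt_givens 0 i' j' (ne_of_lt hlt)]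
    rfl
  rw [hF, ← List.map_flatten, List.prod_hom _ (liftAt (0 : Fin (n+1)))]

lemma succAbove_one_zero : (1 : Fin (n+2)).succAbove 0 = 0 := by
  rw [Fin.succAbove_of_castSucc_lt]
  · rfl
  · simp [Fin.lt_def]

lemma succAbove_one_succ (k : Fin n) :
    (1 : Fin (n+2)).succAbove k.succ = k.succ.succ := by
  have h : (1 : Fin (n+2)) ≤ (k.succ).castSucc := by
    rw [Fin.le_def]
    simp
  rw [Fin.succAbove_of_le_castSucc _ _ h]

lemma rowProd_succ (t : Fin (n+2) → ℝ) :
    rowProd (n+1) t = givensMat (n+2) 0 1 (t 1) *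
      liftAt 1 (rowProd n (fun j => t ((1 : Fin (n+2)).succAbove j))) := by
  unfold rowProd
  rw [filter_finRange_zero, List.map_map, map_finRange_succ, List.prod_cons]
  congr 1
  rw [filter_finRange_zero, List.map_map, ← List.prod_hom _ (liftAt (1 : Fin (n+2))), List.map_map]
  apply congrArg List.prod
  apply List.map_congr_left
  intro k _
  simp only [Function.comp_apply]
  rw [liftAt_givens 1 0 k.succ (Fin.succ_ne_zero k).symm, succAbove_one_zero,
    succAbove_one_succ]

lemma rowProd_orth (t : Fin (n+1) → ℝ) : (rowProd n t)ᵀ * rowProd n t = 1 := by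
  apply prod_orth
  intro M hM
  simp only [rowProd, List.mem_map] at hM
  obtain ⟨j, hj, rfl⟩ := hM
  have hlt : (0 : Fin (n+1)) < j := by simpa using (List.mem_filter.mp hj).2
  exact givens_orth (ne_of_lt hlt) _

lemma rotMat_orth (θ : Fin n → Fin n → ℝ) : (rotMat n θ)ᵀ * rotMat n θ = 1 := by
  apply prod_orth
  intro M hM
  rw [List.mem_flatten] at hM
  obtain ⟨L, hL, hML⟩ := hM
  simp only [List.mem_map] at hL
  obtain ⟨i, _, rfl⟩ := hL
  simp only [List.mem_map] at hML
  obtain ⟨j, hj, rfl⟩ := hML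
  have hlt : i < j := by simpa using (List.mem_filter.mp hj).2
  exact givens_orth (ne_of_lt hlt) _

lemma rotMat_det (θ : Fin n → Fin n → ℝ) : (rotMat n θ).det = 1 := by
  apply prod_det
  intro M hM
  rw [List.mem_flatten] at hM
  obtain ⟨L, hL, hML⟩ := hM
  simp only [List.mem_map] at hL
  obtain ⟨i, _, rfl⟩ := hL
  simp only [List.mem_map] at hML
  obtain ⟨j, hj, rfl⟩ := hML
  have hlt : i < j := by simpa using (List.mem_filter.mp hj).2
  exact givens_det (ne_of_lt hlt) _

lemma rotMat_zero' (θ : Fin 0 → Fin 0 → ℝ) : rotMat 0 θ = 1 := by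
  simp [rotMat]

lemma rowProd_zero' (t : Fin 1 → ℝ) : rowProd 0 t = 1 := by
  rw [rowProd, filter_finRange_zero]
  simp

lemma rotMat_one' (θ : Fin 1 → Fin 1 → ℝ) : rotMat 1 θ = 1 := by
  rw [rotMat_succ, rowProd_zero', rotMat_zero', _root_.map_one, one_mul]

lemma exists_cos_sin (a b c : ℝ) (hc : 0 ≤ c) (h : c * c = a * a + b * b) :
    ∃ φ, c * Real.cos φ = a ∧ c * Real.sin φ = b := by
  rcases eq_or_lt_of_le hc with hc0 | hc0
  · have ha : a = 0 := by nlinarith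
    have hb : b = 0 := by nlinarith
    exact ⟨0, by simp [← hc0, ha], by simp [← hc0, hb]⟩
  · set z : ℂ := ⟨a, b⟩ with hzdef
    have hz : ‖z‖ = c := by
      rw [Complex.norm_def, Complex.normSq_mk, ← h]
      exact Real.sqrt_mul_self hc
    have hz0 : z ≠ 0 := by
      intro e
      rw [e, norm_zero] at hz
      exact absurd hz.symm (ne_of_gt hc0)
    refine ⟨Complex.arg z, ?_, ?_⟩
    · rw [Complex.cos_arg hz0, hz]
      show c * (a / c) = a
      field_simp
    · rw [Complex.sin_arg, hz]
      show c * (b / c) = b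
      field_simp

lemma pre_succAbove (k : Fin (n+1)) :
    (if h : ((1 : Fin (n+2)).succAbove k) = 0 then (0 : Fin (n+1))
      else ⟨((1 : Fin (n+2)).succAbove k).val - 1, by omega⟩) = k := by
  induction k using Fin.cases with
  | zero => simp [succAbove_one_zero]
  | succ k' =>
    simp only [succAbove_one_succ]
    rw [dif_neg (Fin.succ_ne_zero _)]
    apply Fin.ext
    simp

lemma sphAux (m : ℕ) : ∀ (u : Fin (m+1) → ℝ), (∑ k, u k * u k) = 1 →
    (0 ≤ u 0 ∨ 1 ≤ m) → ∃ t, ∀ k, rowProd m t k 0 = u k := by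
  induction m with
  | zero =>
    intro u hsum hsign
    have h1 : u 0 * u 0 = 1 := by simpa using hsum
    have hs : 0 ≤ u 0 := hsign.resolve_right (by omega)
    have h0 : u 0 = 1 := by nlinarith
    refine ⟨fun _ => 0, fun k => ?_⟩
    have hk : k = 0 := Fin.ext (by omega)
    rw [rowProd_zero', hk, h0]
    simp [Matrix.one_apply]
  | succ m ih =>
    intro u hsum _
    set a := u 0 with ha
    set b := u 1 with hb
    set c := Real.sqrt (a*a + b*b) with hc
    have hc0 : 0 ≤ c := Real.sqrt_nonneg _
    have hcc : c * c = a*a + b*b := Real.mul_self_sqrt (add_nonneg (mul_self_nonneg a) (mul_self_nonneg b))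
    obtain ⟨φ, hφa, hφb⟩ := exists_cos_sin a b c hc0 hcc
    set u' : Fin (m+1) → ℝ := fun k => if k = 0 then c else u ((1 : Fin (m+2)).succAbove k)
      with hu'
    have hu'0 : u' 0 = c := by simp [hu']
    have hu'succ : ∀ k : Fin m, u' k.succ = u k.succ.succ := by
      intro k
      simp [hu', Fin.succ_ne_zero k, succAbove_one_succ]
    have hsum' : (∑ k, u' k * u' k) = 1 := by
      rw [Fin.sum_univ_succ, Fin.sum_univ_succ] at hsum
      rw [Fin.sum_univ_succ, hu'0]
      have : ∑ k : Fin m, u' k.succ * u' k.succ = ∑ k : Fin m, u k.succ.succ * u k.succ.succ :=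
        Finset.sum_congr rfl (fun k _ => by rw [hu'succ])
      rw [this, hcc]
      rw [Fin.succ_zero_eq_one] at hsum
      linarith [hsum]
    obtain ⟨t', ht'⟩ := ih u' hsum' (Or.inl (hu'0 ▸ hc0))
    set t : Fin (m+2) → ℝ := fun j => if j = 1 then φ
      else t' (if h : j = 0 then (0 : Fin (m+1)) else ⟨j.val - 1, by omega⟩) with ht
    have hteq : (fun j => t ((1 : Fin (m+2)).succAbove j)) = t' := by
      funext k
      rw [ht]
      simp only
      rw [if_neg (Fin.succAbove_ne 1 k), pre_succAbove]
    have ht1 : t 1 = φ := by simp [ht]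
    refine ⟨t, fun k => ?_⟩
    rw [rowProd_succ, hteq, ht1]
    have h01 : (0 : Fin (m+2)) ≠ 1 := by
      intro e
      exact absurd (congrArg Fin.val e) (by simp)
    rw [givens_row h01]
    have hL00 : liftAt 1 (rowProd m t') 0 0 = c := by
      rw [← succAbove_one_zero (n := m), liftAt_apply_succAbove, ht' 0, hu'0]
    have hL10 : liftAt 1 (rowProd m t') 1 0 = 0 := by
      rw [← succAbove_one_zero (n := m), liftAt_apply_pivot_succAbove]
    by_cases hk0 : k = 0
    · rw [if_pos hk0, hL00, hL10, hk0, ← ha]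
      rw [← hφa]; ring
    · by_cases hk1 : k = 1
      · rw [if_neg hk0, if_pos hk1, hL00, hL10, hk1, ← hb]
        rw [← hφb]; ring
      · rw [if_neg hk0, if_neg hk1]
        obtain ⟨k', rfl⟩ := Fin.exists_succAbove_eq hk1
        rw [← succAbove_one_zero (n := m), liftAt_apply_succAbove, ht' k']
        have hk'0 : k' ≠ 0 := by
          intro e
          rw [e, succAbove_one_zero] at hk0
          exact hk0 rfl
        simp [hu', hk'0]

lemma rowProd_det (t : Fin (n+1) → ℝ) : (rowProd n t).det = 1 := by
  apply prod_det
  intro M hM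
  simp only [rowProd, List.mem_map] at hM
  obtain ⟨j, hj, rfl⟩ := hM
  have hlt : (0 : Fin (n+1)) < j := by simpa using (List.mem_filter.mp hj).2
  exact givens_det (ne_of_lt hlt) _

lemma soDecomp : ∀ (n : ℕ) (U : Matrix (Fin n) (Fin n) ℝ), Uᵀ * U = 1 → U.det = 1 →
    ∃ θ : Fin n → Fin n → ℝ, U = rotMat n θ := by
  intro n
  induction n with
  | zero =>
    intro U _ _
    refine ⟨fun _ _ => 0, ?_⟩
    funext a
    exact a.elim0
  | succ n ih =>
    cases n with
    | zero =>
      intro U _ hdet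
      refine ⟨fun _ _ => 0, ?_⟩
      rw [rotMat_one']
      funext a b
      have ha : a = 0 := Fin.ext (by omega)
      have hb : b = 0 := Fin.ext (by omega)
      rw [ha, hb, Matrix.one_apply_eq]
      rw [Matrix.det_fin_one] at hdet
      exact hdet
    | succ m =>
      intro U hU hdet
      have hsum : ∑ k, U k 0 * U k 0 = 1 := by
        have h := congrFun (congrFun hU 0) 0
        rw [Matrix.mul_apply] at h
        simpa [Matrix.transpose_apply, Matrix.one_apply] using h
      obtain ⟨t, ht⟩ := sphAux (m+1) (fun k => U k 0) hsum (Or.inr (by omega))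
      set P := rowProd (m+1) t with hPdef
      have hPo : Pᵀ * P = 1 := rowProd_orth t
      have hPo2 : P * Pᵀ = 1 := mul_eq_one_comm.mp hPo
      set W := Pᵀ * U with hWdef
      have hWo : Wᵀ * W = 1 := by
        rw [hWdef, Matrix.transpose_mul, Matrix.transpose_transpose, mul_assoc,
          ← mul_assoc P Pᵀ U, hPo2, one_mul, hU]
      have hWcol : ∀ k, W k 0 = if k = 0 then 1 else 0 := by
        intro k
        have h1 : W k 0 = (Pᵀ * P) k 0 := by
          rw [hWdef, Matrix.mul_apply, Matrix.mul_apply]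
          exact Finset.sum_congr rfl (fun j _ => by rw [← ht j])
        rw [h1, hPo]
        exact Matrix.one_apply
      have hWrow : ∀ l : Fin (m+1), W 0 l.succ = 0 := by
        have hWo2 : W * Wᵀ = 1 := mul_eq_one_comm.mp hWo
        have h1 : ∑ l, W 0 l * W 0 l = 1 := by
          have h := congrFun (congrFun hWo2 0) 0
          rw [Matrix.mul_apply] at h
          simpa [Matrix.transpose_apply, Matrix.one_apply] using h
        rw [Fin.sum_univ_succ] at h1
        have hW00 : W 0 0 = 1 := by rw [hWcol 0]; simp
        rw [hW00, one_mul] at h1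
        have h2 : ∑ l : Fin (m+1), W 0 l.succ * W 0 l.succ = 0 := by linarith
        intro l
        exact mul_self_eq_zero.mp
          ((Finset.sum_eq_zero_iff_of_nonneg
            (fun i _ => mul_self_nonneg (W 0 i.succ))).mp h2 l (Finset.mem_univ l))
      set W' : Matrix (Fin (m+1)) (Fin (m+1)) ℝ := fun a b => W a.succ b.succ with hW'def
      have hblock : W = liftAt 0 W' := by
        funext a b
        induction a using Fin.cases with
        | zero =>
          induction b using Fin.cases with
          | zero =>
            rw [liftAt_apply_pivot_pivot, hWcol 0]
            simp
          | succ b' => exact (hWrow b').trans (liftAt_apply_pivot_succAbove 0 W' b').symm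
        | succ a' =>
          induction b using Fin.cases with
          | zero =>
            refine Eq.trans ?_ (liftAt_apply_succAbove_pivot 0 W' a').symm
            rw [hWcol]
            simp [Fin.succ_ne_zero]
          | succ b' => exact (liftAt_apply_succAbove 0 W' a' b').symm
      have hW'o : W'ᵀ * W' = 1 := by
        funext a b
        rw [Matrix.mul_apply]
        have h := congrFun (congrFun hWo a.succ) b.succ
        rw [Matrix.mul_apply, Fin.sum_univ_succ] at h
        simp only [Matrix.transpose_apply] at h ⊢
        rw [hWrow a, zero_mul, zero_add] at h
        have h2 : (1 : Matrix (Fin (m+2)) (Fin (m+2)) ℝ) a.succ b.succ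
            = (1 : Matrix (Fin (m+1)) (Fin (m+1)) ℝ) a b := by
          simp [Matrix.one_apply, Fin.succ_inj]
        rw [h2] at h
        simp only [hW'def]
        exact h
      have hW'det : W'.det = 1 := by
        have h3 : W.det = 1 := by
          rw [hWdef, Matrix.det_mul, Matrix.det_transpose, hdet, mul_one, hPdef]
          exact rowProd_det t
        rw [hblock, liftAt_det] at h3
        exact h3
      obtain ⟨θ', hθ'⟩ := ih W' hW'o hW'det
      set θbig : Fin (m+2) → Fin (m+2) → ℝ := fun i j => if i = 0 then t j
        else θ' (if h : i = 0 then 0 else ⟨i.val - 1, by omega⟩)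
               (if h : j = 0 then 0 else ⟨j.val - 1, by omega⟩) with hθbig
      have e0 : θbig 0 = t := by
        funext j
        simp [hθbig]
      have e1 : (fun (i j : Fin (m+1)) => θbig i.succ j.succ) = θ' := by
        funext i j
        simp only [hθbig]
        rw [if_neg (Fin.succ_ne_zero i), dif_neg (Fin.succ_ne_zero i),
          dif_neg (Fin.succ_ne_zero j)]
        congr 1 <;> exact Fin.ext (by simp)
      refine ⟨θbig, ?_⟩
      rw [rotMat_succ, e0, e1, ← hθ', ← hblock, hWdef, ← mul_assoc, hPo2, one_mul]

theorem rotation_modeling_of_covariance' (n : ℕ) (hn : 2 ≤ n) :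
    (∀ Q : Matrix (Fin n) (Fin n) ℝ, Q.PosSemidef →
      ∃ (lam : Fin n → ℝ) (θ : Fin n → Fin n → ℝ), (∀ i, 0 ≤ lam i) ∧
        Q = rotMat n θ * Matrix.diagonal lam * (rotMat n θ)ᵀ) ∧
    (∀ (lam : Fin n → ℝ) (θ : Fin n → Fin n → ℝ), (∀ i, 0 ≤ lam i) →
      (rotMat n θ * Matrix.diagonal lam * (rotMat n θ)ᵀ).PosSemidef) := by
  constructor
  · intro Q hQ
    have hH : Q.IsHermitian := hQ.1
    have hspec := hH.spectral_theorem
    set V : Matrix (Fin n) (Fin n) ℝ := (hH.eigenvectorUnitary : Matrix (Fin n) (Fin n) ℝ) with hV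
    have hVo : Vᵀ * V = 1 := by
      have hmem := hH.eigenvectorUnitary.2
      rw [Matrix.mem_unitaryGroup_iff'] at hmem
      rwa [Matrix.star_eq_conjTranspose, Matrix.conjTranspose_eq_transpose_of_trivial] at hmem
    have hVo2 : V * Vᵀ = 1 := mul_eq_one_comm.mp hVo
    set d : Fin n → ℝ := hH.eigenvalues with hd
    have hQd : Q = V * Matrix.diagonal d * Vᵀ := by
      have hid : (RCLike.ofReal ∘ hH.eigenvalues : Fin n → ℝ) = d := by
        rw [RCLike.ofReal_real_eq_id]
        rfl
      rw [hspec, Unitary.conjStarAlgAut_apply, Matrix.star_eq_conjTranspose, Matrix.conjTranspose_eq_transpose_of_trivial, hid]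
    have hdnn : ∀ i, 0 ≤ d i := fun i => hQ.eigenvalues_nonneg i
    have hdet2 : V.det * V.det = 1 := by
      have h := congrArg Matrix.det hVo
      rwa [Matrix.det_mul, Matrix.det_transpose, Matrix.det_one] at h
    obtain ⟨m, rfl⟩ : ∃ m, n = m + 2 := ⟨n - 2, by omega⟩
    by_cases hdet : V.det = 1
    · obtain ⟨θ, hθ⟩ := soDecomp (m+2) V hVo hdet
      exact ⟨d, θ, hdnn, by rw [← hθ]; exact hQd⟩
    · have hdet' : V.det = -1 := by
        rcases mul_self_eq_one_iff.mp hdet2 with h | h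
        exacts [absurd h hdet, h]
      set s : Fin (m+2) → ℝ := fun k => if k = 0 then -1 else 1 with hs
      set E := Matrix.diagonal s with hE
      have hEE : E * E = 1 := by
        rw [hE, Matrix.diagonal_mul_diagonal]
        have hss : (fun i => s i * s i) = fun _ => (1:ℝ) := by
          funext k
          simp only [hs]
          split_ifs <;> norm_num
        rw [hss, Matrix.diagonal_one]
      have hEt : Eᵀ = E := Matrix.diagonal_transpose s
      have hdetE : E.det = -1 := by
        rw [hE, Matrix.det_diagonal, Fin.prod_univ_succ]
        have h1 : ∀ k : Fin (m+1), s k.succ = 1 := fun k => by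
          simp only [hs]
          exact if_neg (Fin.succ_ne_zero k)
        rw [Finset.prod_congr rfl (fun k _ => h1 k)]
        simp [hs]
      set V' := V * E with hV'
      have hV'o : V'ᵀ * V' = 1 := by
        rw [hV', Matrix.transpose_mul, hEt, mul_assoc, ← mul_assoc Vᵀ V E, hVo, one_mul, hEE]
      have hV'det : V'.det = 1 := by
        rw [hV', Matrix.det_mul, hdet', hdetE]
        norm_num
      have hEDE : E * Matrix.diagonal d * E = Matrix.diagonal d := by
        rw [hE, Matrix.diagonal_mul_diagonal, Matrix.diagonal_mul_diagonal]
        have hss : (fun i => s i * d i * s i) = d := by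
          funext k
          simp only [hs]
          split_ifs <;> ring
        rw [hss]
      have hQd' : Q = V' * Matrix.diagonal d * V'ᵀ := by
        rw [hV', Matrix.transpose_mul, hEt]
        have hc : Q = V * (E * Matrix.diagonal d * E) * Vᵀ := by
          rw [hEDE]
          exact hQd
        rw [hc]
        simp only [mul_assoc]
      obtain ⟨θ, hθ⟩ := soDecomp (m+2) V' hV'o hV'det
      exact ⟨d, θ, hdnn, by rw [← hθ]; exact hQd'⟩
  · intro lam θ hlam
    have hD : (Matrix.diagonal lam).PosSemidef := Matrix.posSemidef_diagonal_iff.mpr hlam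
    have h := hD.mul_mul_conjTranspose_same (rotMat n θ)
    rwa [Matrix.conjTranspose_eq_transpose_of_trivial] at h

/-- (Lemma 1) For n ≥ 2, every symmetric positive semidefinite Q ∈ ℝ^{n×n} can be written
as Q = V(θ) diag(λ) V(θ)ᵀ with λ_i ≥ 0, and conversely every matrix of this form with
nonnegative diagonal Λ is symmetric positive semidefinite. -/
theorem rotation_modeling_of_covariance (n : ℕ) (hn : 2 ≤ n) :
    (∀ Q : Matrix (Fin n) (Fin n) ℝ, Q.PosSemidef →
      ∃ (lam : Fin n → ℝ) (θ : Fin n → Fin n → ℝ), (∀ i, 0 ≤ lam i) ∧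
        Q = rotMat n θ * Matrix.diagonal lam * (rotMat n θ)ᵀ) ∧
    (∀ (lam : Fin n → ℝ) (θ : Fin n → Fin n → ℝ), (∀ i, 0 ≤ lam i) →
      (rotMat n θ * Matrix.diagonal lam * (rotMat n θ)ᵀ).PosSemidef) :=
  rotation_modeling_of_covariance' n hn
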